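/- The two-variable polynomials p_{m,n} ∈ ℤ[X,Y] defined by p_{0,0}=1, p_{1,0}=X, p_{0,1}=Y, p with negative indices equal to 0, and the recursions X·p_{m,n} = p_{m+1,n} + p_{m-1,n+1} + p_{m,n-1} and Y·p_{m,n} = p_{m,n+1} + p_{m+1,n-1} + p_{m-1,n}, are uniquely determined by these conditions, and satisfy the symmetry p_{m,n}(X,Y) = p_{n,m}(Y,X) for all m,n ∈ ℕ. -/
import Mathlib


open MvPolynomial

/-- The defining conditions of the `sl₃` Chebyshev-like polynomials `p_{m,n} ∈ ℤ[X,Y]`: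
`p_{m,n} = 0` for negative indices, `p_{0,0} = 1`, `p_{1,0} = X`, `p_{0,1} = Y`,
and the two Chebyshev-like recursions. -/
def IsSl3Cheb (p : ℤ → ℤ → MvPolynomial (Fin 2) ℤ) : Prop :=
  (∀ m n : ℤ, m < 0 ∨ n < 0 → p m n = 0) ∧
  p 0 0 = 1 ∧ p 1 0 = X 0 ∧ p 0 1 = X 1 ∧
  (∀ m n : ℤ, 0 ≤ m → 0 ≤ n →
    X 0 * p m n = p (m + 1) n + p (m - 1) (n + 1) + p m (n - 1)) ∧
  (∀ m n : ℤ, 0 ≤ m → 0 ≤ n →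
    X 1 * p m n = p m (n + 1) + p (m + 1) (n - 1) + p (m - 1) n)

noncomputable def Psl3 : ℤ → ℤ → MvPolynomial (Fin 2) ℤ
  | m, n =>
    if m < 0 ∨ n < 0 then 0
    else if m = 0 then
      if n = 0 then 1 else X 1 * Psl3 0 (n - 1) - Psl3 1 (n - 2)
    else X 0 * Psl3 (m - 1) n - Psl3 (m - 2) (n + 1) - Psl3 (m - 1) (n - 1)
  termination_by m n => (m + n).toNat
  decreasing_by all_goals omega

lemma Psl3_neg {m n : ℤ} (h : m < 0 ∨ n < 0) : Psl3 m n = 0 := by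
  rw [Psl3.eq_def]; simp [h]

lemma Psl3_pos {m n : ℤ} (hm : 1 ≤ m) (hn : 0 ≤ n) :
    Psl3 m n = X 0 * Psl3 (m - 1) n - Psl3 (m - 2) (n + 1) - Psl3 (m - 1) (n - 1) := by
  rw [Psl3.eq_def]
  have h1 : ¬ (m < 0 ∨ n < 0) := by omega
  have h2 : m ≠ 0 := by omega
  simp [h1, h2]

lemma Psl3_zero {n : ℤ} (hn : 0 ≤ n) :
    Psl3 0 (n + 1) = X 1 * Psl3 0 n - Psl3 1 (n - 1) := by
  rw [Psl3.eq_def]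
  have h1 : ¬ ((0:ℤ) < 0 ∨ n + 1 < 0) := by omega
  have h2 : n + 1 ≠ 0 := by omega
  simp only []
  rw [if_neg h1]
  norm_num [h2]
  ring_nf

lemma Psl3_Yrec : ∀ (k : ℕ) (m : ℤ), m = (k : ℤ) → ∀ n : ℤ, 0 ≤ n →
    X 1 * Psl3 m n = Psl3 m (n + 1) + Psl3 (m + 1) (n - 1) + Psl3 (m - 1) n := by
  intro k
  induction k using Nat.strong_induction_on with
  | _ k IH =>
  intro m hmk n hn
  have hm0 : 0 ≤ m := by omega
  rcases (by omega : m = 0 ∨ 1 ≤ m) with h0 | h1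
  · subst h0
    have z : Psl3 ((0:ℤ) - 1) n = 0 := Psl3_neg (Or.inl (by norm_num))
    rw [Psl3_zero hn, z]
    ring_nf
  · have IH' : ∀ m' n' : ℤ, 0 ≤ m' → m' < m → 0 ≤ n' →
        X 1 * Psl3 m' n' = Psl3 m' (n' + 1) + Psl3 (m' + 1) (n' - 1) + Psl3 (m' - 1) n' := by
      intro m' n' h1' h2' h3'
      exact IH m'.toNat (by omega) m' (by omega) n' h3'
    have E1 := Psl3_pos h1 hn
    have E2 : X 1 * Psl3 (m - 1) n = Psl3 (m - 1) (n + 1) + Psl3 m (n - 1) + Psl3 (m - 2) n := by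
      have h := IH' (m - 1) n (by omega) (by omega) hn
      rw [show m - 1 + 1 = m by ring, show m - 1 - 1 = m - 2 by ring] at h
      exact h
    have E37 : X 1 * Psl3 (m - 2) (n + 1) + Psl3 (m - 1) n =
        Psl3 (m - 2) (n + 2) + Psl3 (m - 1) n + Psl3 (m - 3) (n + 1) +
          (X 0 * Psl3 (m - 2) n - Psl3 (m - 3) (n + 1) - Psl3 (m - 2) (n - 1)) := by
      rcases (by omega : m = 1 ∨ 2 ≤ m) with h2 | h2
      · subst h2
        have z1 : Psl3 (1 - 2 : ℤ) (n + 1) = 0 := Psl3_neg (by omega)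
        have z2 : Psl3 (1 - 2 : ℤ) (n + 2) = 0 := Psl3_neg (by omega)
        have z3 : Psl3 (1 - 3 : ℤ) (n + 1) = 0 := Psl3_neg (by omega)
        have z4 : Psl3 (1 - 2 : ℤ) n = 0 := Psl3_neg (by omega)
        have z5 : Psl3 (1 - 2 : ℤ) (n - 1) = 0 := Psl3_neg (by omega)
        rw [z1, z2, z3, z4, z5]; ring
      · have A := IH' (m - 2) (n + 1) (by omega) (by omega) (by omega)
        rw [show m - 2 + 1 = m - 1 by ring, show m - 2 - 1 = m - 3 by ring,
            show n + 1 + 1 = n + 2 by ring, show n + 1 - 1 = n by ring] at A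
        have B := Psl3_pos (show (1:ℤ) ≤ m - 1 by omega) hn
        rw [show m - 1 - 1 = m - 2 by ring, show m - 1 - 2 = m - 3 by ring] at B
        linear_combination A + B
    have E46 : X 1 * Psl3 (m - 1) (n - 1) + Psl3 (m + 1) (n - 1) =
        Psl3 (m - 1) n + Psl3 m (n - 2) + Psl3 (m - 2) (n - 1) +
          (X 0 * Psl3 m (n - 1) - Psl3 (m - 1) n - Psl3 m (n - 2)) := by
      rcases (by omega : n = 0 ∨ 1 ≤ n) with h2 | h2
      · subst h2
        have z1 : Psl3 (m - 1) (0 - 1 : ℤ) = 0 := Psl3_neg (by omega)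
        have z2 : Psl3 (m + 1) (0 - 1 : ℤ) = 0 := Psl3_neg (by omega)
        have z3 : Psl3 m (0 - 2 : ℤ) = 0 := Psl3_neg (by omega)
        have z4 : Psl3 (m - 2) (0 - 1 : ℤ) = 0 := Psl3_neg (by omega)
        have z5 : Psl3 m (0 - 1 : ℤ) = 0 := Psl3_neg (by omega)
        rw [z1, z2, z3, z4, z5]; ring
      · have A := IH' (m - 1) (n - 1) (by omega) (by omega) (by omega)
        rw [show m - 1 + 1 = m by ring, show m - 1 - 1 = m - 2 by ring,
            show n - 1 + 1 = n by ring, show n - 1 - 1 = n - 2 by ring] at A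
        have B := Psl3_pos (show (1:ℤ) ≤ m + 1 by omega) (show (0:ℤ) ≤ n - 1 by omega)
        rw [show m + 1 - 1 = m by ring, show m + 1 - 2 = m - 1 by ring,
            show n - 1 + 1 = n by ring, show n - 1 - 1 = n - 2 by ring] at B
        linear_combination A + B
    have E5 := Psl3_pos h1 (show (0:ℤ) ≤ n + 1 by omega)
    rw [show n + 1 + 1 = n + 2 by ring, show n + 1 - 1 = n by ring] at E5
    linear_combination X 1 * E1 + X 0 * E2 - E37 - E46 - E5

lemma Psl3_isCheb : IsSl3Cheb Psl3 := by
  refine ⟨fun m n h => Psl3_neg h, ?_, ?_, ?_, ?_, ?_⟩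
  · rw [Psl3.eq_def]; norm_num
  · rw [Psl3_pos le_rfl le_rfl]
    have h00 : Psl3 (1 - 1 : ℤ) (0 : ℤ) = 1 := by rw [Psl3.eq_def]; norm_num
    rw [h00, Psl3_neg (Or.inl (by omega)), Psl3_neg (Or.inr (by omega))]
    ring
  · have := Psl3_zero (le_refl (0:ℤ))
    norm_num at this
    rw [this]
    have h00 : Psl3 (0 : ℤ) (0 : ℤ) = 1 := by rw [Psl3.eq_def]; norm_num
    have h1 : Psl3 (1 : ℤ) (-1 : ℤ) = 0 := Psl3_neg (by omega)
    rw [h00, h1]; ring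
  · intro m n hm hn
    have h := Psl3_pos (show (1:ℤ) ≤ m + 1 by omega) hn
    rw [show m + 1 - 1 = m by ring, show m + 1 - 2 = m - 1 by ring] at h
    linear_combination -h
  · intro m n hm hn
    exact Psl3_Yrec m.toNat m (by omega) n hn

lemma isCheb_unique (p q : ℤ → ℤ → MvPolynomial (Fin 2) ℤ)
    (hp : IsSl3Cheb p) (hq : IsSl3Cheb q) : p = q := by
  obtain ⟨hp0, hp1, hp2, hp3, hpX, hpY⟩ := hp
  obtain ⟨hq0, hq1, hq2, hq3, hqX, hqY⟩ := hq
  have key : ∀ s : ℕ, ∀ m n : ℤ, m + n ≤ (s : ℤ) → p m n = q m n := by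
    intro s
    induction s using Nat.strong_induction_on with
    | _ s IH =>
    intro m n hs
    by_cases hneg : m < 0 ∨ n < 0
    · rw [hp0 m n hneg, hq0 m n hneg]
    · push_neg at hneg
      obtain ⟨hm, hn⟩ := hneg
      rcases (by omega : 1 ≤ m ∨ (m = 0 ∧ 1 ≤ n) ∨ (m = 0 ∧ n = 0)) with h | ⟨h, h'⟩ | ⟨h, h'⟩
      · have hs1 : 1 ≤ s := by omega
        have Ep := hpX (m - 1) n (by omega) hn
        have Eq := hqX (m - 1) n (by omega) hn
        rw [show m - 1 + 1 = m by ring, show m - 1 - 1 = m - 2 by ring] at Ep Eq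
        have e1 : p (m - 1) n = q (m - 1) n := IH (s - 1) (by omega) _ _ (by omega)
        have e2 : p (m - 2) (n + 1) = q (m - 2) (n + 1) := by
          by_cases h2 : m - 2 < 0
          · rw [hp0 _ _ (Or.inl h2), hq0 _ _ (Or.inl h2)]
          · exact IH (s - 1) (by omega) _ _ (by omega)
        have e3 : p (m - 1) (n - 1) = q (m - 1) (n - 1) := by
          by_cases h2 : n - 1 < 0
          · rw [hp0 _ _ (Or.inr h2), hq0 _ _ (Or.inr h2)]
          · exact IH (s - 1) (by omega) _ _ (by omega)
        linear_combination Eq - Ep + X 0 * e1 - e2 - e3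
      · subst h
        have hs1 : 1 ≤ s := by omega
        have Ep := hpY 0 (n - 1) le_rfl (by omega)
        have Eq := hqY 0 (n - 1) le_rfl (by omega)
        rw [show n - 1 + 1 = n by ring, show n - 1 - 1 = n - 2 by ring] at Ep Eq
        have z1 : p (0 - 1 : ℤ) (n - 1) = 0 := hp0 _ _ (Or.inl (by omega))
        have z2 : q (0 - 1 : ℤ) (n - 1) = 0 := hq0 _ _ (Or.inl (by omega))
        have e1 : p 0 (n - 1) = q 0 (n - 1) := IH (s - 1) (by omega) _ _ (by omega)
        have e2 : p (0 + 1 : ℤ) (n - 2) = q (0 + 1 : ℤ) (n - 2) := by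
          by_cases h2 : n - 2 < 0
          · rw [hp0 _ _ (Or.inr h2), hq0 _ _ (Or.inr h2)]
          · exact IH (s - 1) (by omega) _ _ (by omega)
        rw [z1] at Ep; rw [z2] at Eq
        linear_combination Eq - Ep + X 1 * e1 - e2
      · subst h; subst h'
        rw [hp1, hq1]
  funext m n
  by_cases hneg : m < 0 ∨ n < 0
  · rw [hp0 m n hneg, hq0 m n hneg]
  · exact key (m + n).toNat m n (by omega)

/-- The `sl₃` Chebyshev polynomials exist, are uniquely determined by their defining
conditions, and satisfy the symmetry `p_{m,n}(X,Y) = p_{n,m}(Y,X)` for all `m, n ∈ ℕ`. -/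
theorem stmt_1 :
    (∃ p, IsSl3Cheb p) ∧
    (∀ p q, IsSl3Cheb p → IsSl3Cheb q → p = q) ∧
    (∀ p, IsSl3Cheb p → ∀ m n : ℕ,
      p (m : ℤ) (n : ℤ) =
        MvPolynomial.rename (Equiv.swap (0 : Fin 2) 1) (p (n : ℤ) (m : ℤ))) := by
  refine ⟨⟨Psl3, Psl3_isCheb⟩, isCheb_unique, ?_⟩
  intro p hp m n
  set σ : Fin 2 ≃ Fin 2 := Equiv.swap (0 : Fin 2) 1 with hσ
  have hσ0 : σ (0 : Fin 2) = 1 := Equiv.swap_apply_left _ _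
  have hσ1 : σ (1 : Fin 2) = 0 := Equiv.swap_apply_right _ _
  obtain ⟨hp0, hp1, hp2, hp3, hpX, hpY⟩ := hp
  have hq : IsSl3Cheb (fun m n => rename σ (p n m)) := by
    refine ⟨?_, ?_, ?_, ?_, ?_, ?_⟩
    · intro m n h
      simp only
      rw [hp0 n m (h.symm), map_zero]
    · simp only; rw [hp1, map_one]
    · simp only; rw [hp3, rename_X, hσ1]
    · simp only; rw [hp2, rename_X, hσ0]
    · intro m n hm hn
      simp only
      have := hpY n m hn hm
      calc X 0 * rename σ (p n m) = rename σ (X 1 * p n m) := by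
            rw [map_mul, rename_X, hσ1]
          _ = _ := by rw [this, map_add, map_add]
    · intro m n hm hn
      simp only
      have := hpX n m hn hm
      calc X 1 * rename σ (p n m) = rename σ (X 0 * p n m) := by
            rw [map_mul, rename_X, hσ0]
          _ = _ := by rw [this, map_add, map_add]
  have := isCheb_unique p (fun m n => rename σ (p n m)) ⟨hp0, hp1, hp2, hp3, hpX, hpY⟩ hq
  exact congrFun (congrFun this m) n
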